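/- Let F be a field of characteristic p > 0, G a finite group with p dividing |G|, and V a faithful G-module. Then topdeg F[V^m]_G ≥ m(p−1) for all positive integers m, where V^m is the direct sum of m copies of V. -/

import Mathlib

open MvPolynomial

variable {F G ι : Type*} [Field F] [Group G] [Fintype ι] [DecidableEq ι]

/-- The (left) action of a group element `σ` on the polynomial algebra
`F[V] = S(V^*)` presented as `MvPolynomial ι F`, for a matrix representation
`ρ : G →* GL(ι, F)` of `G` on `V = (ι → F)`.  It is given by `σ • f = f ∘ σ⁻¹`,
i.e. by linear substitution of the variables using the matrix of `ρ σ⁻¹`. -/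
noncomputable def polyAct (ρ : G →* (Matrix ι ι F)ˣ) (σ : G)
    (f : MvPolynomial ι F) : MvPolynomial ι F :=
  MvPolynomial.aeval
    (fun i => ∑ j, ((ρ σ⁻¹ : Matrix ι ι F) i j) • (MvPolynomial.X j : MvPolynomial ι F)) f

/-- A polynomial is invariant if it is fixed by the action of every group element. -/
def IsInv (ρ : G →* (Matrix ι ι F)ˣ) (f : MvPolynomial ι F) : Prop :=
  ∀ σ : G, polyAct ρ σ f = f

/-- The Hilbert ideal: the ideal of `F[V]` generated by the homogeneous invariants
of positive degree. -/
noncomputable def hilbertIdeal (ρ : G →* (Matrix ι ι F)ˣ) : Ideal (MvPolynomial ι F) :=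
  Ideal.span {f : MvPolynomial ι F | (∃ d, 0 < d ∧ f.IsHomogeneous d) ∧ IsInv ρ f}

/-- The top degree of the coinvariant algebra `F[V]_G = F[V]/(Hilbert ideal)`:
the largest degree `d` such that the degree-`d` homogeneous component of `F[V]_G`
is nonzero; since the Hilbert ideal is homogeneous this is the largest `d` for
which some homogeneous polynomial of degree `d` is not in the Hilbert ideal. -/
noncomputable def topDeg (ρ : G →* (Matrix ι ι F)ˣ) : ℕ :=
  sSup {d : ℕ | ∃ f : MvPolynomial ι F, f.IsHomogeneous d ∧ f ∉ hilbertIdeal ρ}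

/-- The dimension of the coinvariant algebra `F[V]_G` as an `F`-vector space. -/
noncomputable def coinvDim (ρ : G →* (Matrix ι ι F)ˣ) : ℕ :=
  Module.finrank F (MvPolynomial ι F ⧸ hilbertIdeal ρ)

/-- The representation of `G` on the direct sum `V^m` of `m` copies of `V`,
given by block diagonal matrices. -/
noncomputable def glPow (ρ : G →* (Matrix ι ι F)ˣ) (m : ℕ) :
    G →* (Matrix (ι × Fin m) (ι × Fin m) F)ˣ :=
  (Units.map (Matrix.blockDiagonalRingHom ι (Fin m) F).toMonoidHom).comp
    ((Units.map (Pi.constRingHom (Fin m) (Matrix ι ι F)).toMonoidHom).comp ρ)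


section Helpers

variable {R : Type*} [CommRing R]


variable {R : Type*} [CommRing R]

lemma pderiv_aeval_eq {κ₁ κ₂ : Type*} [Fintype κ₁] [DecidableEq κ₁] [DecidableEq κ₂]
    (τ : κ₁ → MvPolynomial κ₂ R) (i : κ₂) (f : MvPolynomial κ₁ R) :
    pderiv i (aeval τ f) = ∑ j, aeval τ (pderiv j f) * pderiv i (τ j) := by
  induction f using MvPolynomial.induction_on with
  | C a => simp
  | add f g hf hg =>
      rw [map_add, map_add, hf, hg, ← Finset.sum_add_distrib]
      exact Finset.sum_congr rfl fun j _ => by simp only [map_add]; ring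
  | mul_X f j hf =>
      have hXd : ∀ j' : κ₁, pderiv j' (f * X j) =
          pderiv j' f * X j + f * (if j = j' then 1 else 0) := by
        intro j'
        rw [pderiv_mul]
        congr 1
        by_cases h : j = j'
        · subst h; simp
        · simp [pderiv_X_of_ne h, h]
      simp only [map_mul, aeval_X, pderiv_mul, hf, hXd, map_add, add_mul, Finset.sum_add_distrib,
        Finset.sum_mul]
      congr 1
      · exact Finset.sum_congr rfl fun j' _ => by ring
      · rw [Finset.sum_congr rfl (g := fun j' => if j = j' then aeval τ f * pderiv i (τ j) else 0)]
        · simp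
        · intro j' _
          by_cases h : j = j'
          · subst h; simp
          · simp [h]


variable {m : ℕ}

lemma dvd_exponent_of_pderiv_zero {κ : Type*} [DecidableEq κ] (p : ℕ) [CharP F p]
    {h : MvPolynomial κ F} {i : κ} (hz : pderiv i h = 0) {μ : κ →₀ ℕ}
    (hμ : μ ∈ h.support) : p ∣ μ i := by
  rcases Nat.eq_zero_or_pos (μ i) with h0 | hpos
  · simp [h0]
  have hsum : pderiv i h =
      ∑ ν ∈ h.support, monomial (ν - Finsupp.single i 1) (coeff ν h * (ν i : F)) := by
    conv_lhs => rw [h.as_sum]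
    rw [map_sum]
    exact Finset.sum_congr rfl fun ν _ => pderiv_monomial
  have hco := congrArg (coeff (μ - Finsupp.single i 1)) hsum.symm
  rw [hz, coeff_zero] at hco
  rw [coeff_sum] at hco
  rw [Finset.sum_eq_single μ] at hco
  · rw [coeff_monomial, if_pos rfl] at hco
    have : (μ i : F) = 0 := by
      rcases mul_eq_zero.mp hco with hc | hc
      · exact absurd hc (mem_support_iff.mp hμ)
      · exact hc
    exact (CharP.cast_eq_zero_iff F p _).mp this
  · intro ν hν hne
    rw [coeff_monomial]
    rcases Nat.eq_zero_or_pos (ν i) with hν0 | hνpos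
    · simp [hν0]
    rw [if_neg]
    intro heq
    apply hne
    have h1 : Finsupp.single i 1 ≤ ν := by
      rw [Finsupp.single_le_iff]; exact hνpos
    have h2 : Finsupp.single i 1 ≤ μ := by
      rw [Finsupp.single_le_iff]; exact hpos
    calc ν = ν - Finsupp.single i 1 + Finsupp.single i 1 := (tsub_add_cancel_of_le h1).symm
    _ = μ - Finsupp.single i 1 + Finsupp.single i 1 := by rw [heq]
    _ = μ := tsub_add_cancel_of_le h2
  · intro hμ'; exact absurd hμ hμ'

/-- substitution sending `y` variables (inr) to 0 and keeping `x` variables (inl) -/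
noncomputable def yzero (F) [Field F] (m : ℕ) : (Fin m ⊕ Fin m) → MvPolynomial (Fin m ⊕ Fin m) F :=
  Sum.elim (fun j => X (Sum.inl j)) (fun _ => 0)

lemma aeval_yzero_monomial_of_free {m : ℕ} {ν : (Fin m ⊕ Fin m) →₀ ℕ} (hν : ∀ k, ν (Sum.inr k) = 0)
    (c : F) : aeval (yzero F m) (monomial ν c) = monomial ν c := by
  rw [aeval_monomial, monomial_eq]
  congr 1
  unfold Finsupp.prod
  refine Finset.prod_congr rfl fun i hi => ?_
  rcases i with j | k
  · rfl
  · exact absurd (hν k) (Finsupp.mem_support_iff.mp hi)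

lemma aeval_yzero_monomial_of_not_free {m : ℕ} {ν : (Fin m ⊕ Fin m) →₀ ℕ} {k : Fin m}
    (hν : ν (Sum.inr k) ≠ 0) (c : F) : aeval (yzero F m) (monomial ν c) = 0 := by
  rw [aeval_monomial]
  have : (ν.prod fun i e => (yzero F m i) ^ e) = 0 := by
    unfold Finsupp.prod
    apply Finset.prod_eq_zero (Finsupp.mem_support_iff.mpr hν)
    show (0 : MvPolynomial (Fin m ⊕ Fin m) F) ^ _ = 0
    exact zero_pow hν
  rw [this, mul_zero]

lemma coeff_aeval_yzero {m : ℕ} {g : MvPolynomial (Fin m ⊕ Fin m) F} {μ : (Fin m ⊕ Fin m) →₀ ℕ}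
    (hμ : ∀ k, μ (Sum.inr k) = 0) : coeff μ (aeval (yzero F m) g) = coeff μ g := by
  conv_lhs => rw [g.as_sum, map_sum, coeff_sum]
  rw [Finset.sum_eq_single μ]
  · rw [aeval_yzero_monomial_of_free hμ, coeff_monomial, if_pos rfl]
  · intro ν _ hne
    by_cases hfree : ∀ k, ν (Sum.inr k) = 0
    · rw [aeval_yzero_monomial_of_free hfree, coeff_monomial, if_neg hne]
    · push_neg at hfree
      obtain ⟨k, hk⟩ := hfree
      rw [aeval_yzero_monomial_of_not_free hk, coeff_zero]
  · intro hμ'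
    rw [notMem_support_iff.mp hμ', monomial_zero, map_zero, coeff_zero]

/-- the unipotent substitution x_k ↦ x_k + y_k, y_k ↦ y_k -/
noncomputable def tsub' (F) [Field F] (m : ℕ) : (Fin m ⊕ Fin m) → MvPolynomial (Fin m ⊕ Fin m) F :=
  Sum.elim (fun j => X (Sum.inl j) + X (Sum.inr j)) (fun j => X (Sum.inr j))

/-- exponents of the generators of the monomial ideal J -/
def genExp (p m : ℕ) : Set ((Fin m ⊕ Fin m) →₀ ℕ) :=
  (Set.range fun k : Fin m => Finsupp.single (Sum.inr k) 1) ∪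
    (Set.range fun k : Fin m => Finsupp.single (Sum.inl k) p)

theorem small_lemma {m : ℕ} (p : ℕ) [CharP F p] {d : ℕ} (hd : 0 < d)
    {g : MvPolynomial (Fin m ⊕ Fin m) F} (hg : g.IsHomogeneous d)
    (hT : aeval (tsub' F m) g = g) :
    g ∈ Ideal.span ((fun s => monomial s (1 : F)) '' genExp p m) := by
  set T := tsub' F m with hTdef
  -- step 1 : pderiv (inl k) g is T-invariant
  have hA : ∀ k : Fin m, aeval T (pderiv (Sum.inl k) g) = pderiv (Sum.inl k) g := by
    intro k
    have key : pderiv (Sum.inl k) g = aeval T (pderiv (Sum.inl k) g) := by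
      conv_lhs => rw [← hT]
      rw [pderiv_aeval_eq, Finset.sum_eq_single (Sum.inl k : Fin m ⊕ Fin m)]
      · have : pderiv (Sum.inl k) (T (Sum.inl k)) = 1 := by
          simp [hTdef, tsub', pderiv_X_self, pderiv_X_of_ne (by simp : (Sum.inr k : Fin m ⊕ Fin m) ≠ Sum.inl k)]
        rw [this, mul_one]
      · intro j _ hne
        have : pderiv (Sum.inl k) (T j) = 0 := by
          rcases j with j | j
          · have hj : j ≠ k := by rintro rfl; exact hne rfl
            simp [hTdef, tsub', pderiv_X_of_ne (by simpa using hj : (Sum.inl j : Fin m ⊕ Fin m) ≠ Sum.inl k),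
              pderiv_X_of_ne (by simp : (Sum.inr j : Fin m ⊕ Fin m) ≠ Sum.inl k)]
          · simp [hTdef, tsub', pderiv_X_of_ne (by simp : (Sum.inr j : Fin m ⊕ Fin m) ≠ Sum.inl k)]
        rw [this, mul_zero]
      · intro h; exact absurd (Finset.mem_univ _) h
    exact key.symm
  -- step 2 : pderiv (inr k) g = T (pderiv (inl k) g) + T (pderiv (inr k) g)
  have hB : ∀ k : Fin m, pderiv (Sum.inr k) g =
      pderiv (Sum.inl k) g + aeval T (pderiv (Sum.inr k) g) := by
    intro k
    have key : pderiv (Sum.inr k) g =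
        aeval T (pderiv (Sum.inl k) g) + aeval T (pderiv (Sum.inr k) g) := by
      conv_lhs => rw [← hT]
      rw [pderiv_aeval_eq, Finset.sum_eq_add_of_mem (Sum.inl k) (Sum.inr k) (Finset.mem_univ _)
        (Finset.mem_univ _) (by simp)]
      · rw [show pderiv (Sum.inr k) (T (Sum.inl k)) = 1 by
          simp [hTdef, tsub', pderiv_X_self, pderiv_X_of_ne (by simp : (Sum.inl k : Fin m ⊕ Fin m) ≠ Sum.inr k)],
          show pderiv (Sum.inr k) (T (Sum.inr k)) = 1 by simp [hTdef, tsub', pderiv_X_self],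
          mul_one, mul_one]
      · intro j _ hj
        have : pderiv (Sum.inr k) (T j) = 0 := by
          rcases j with j | j
          · have hjk : j ≠ k := by rintro rfl; exact hj.1 rfl
            simp [hTdef, tsub',
              pderiv_X_of_ne (by simpa using hjk : (Sum.inl j : Fin m ⊕ Fin m) ≠ Sum.inr k),
              pderiv_X_of_ne (by simpa using hjk : (Sum.inr j : Fin m ⊕ Fin m) ≠ Sum.inr k)]
          · have hjk : j ≠ k := by rintro rfl; exact hj.2 rfl
            simp [hTdef, tsub',
              pderiv_X_of_ne (by simpa using hjk : (Sum.inr j : Fin m ⊕ Fin m) ≠ Sum.inr k)]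
        rw [this, mul_zero]
    rw [hA] at key
    exact key
  -- step 3 : aeval yzero ∘ aeval T = aeval yzero
  have hcomp : ∀ f : MvPolynomial (Fin m ⊕ Fin m) F,
      aeval (yzero F m) (aeval T f) = aeval (yzero F m) f := by
    intro f
    have : (aeval (yzero F m)).comp (aeval T) = aeval (yzero F m) := by
      apply MvPolynomial.algHom_ext
      rintro (j | j) <;> simp [hTdef, tsub', yzero]
    exact AlgHom.congr_fun this f
  -- step 4 : aeval yzero (pderiv (inl k) g) = 0
  have hC : ∀ k : Fin m, aeval (yzero F m) (pderiv (Sum.inl k) g) = 0 := by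
    intro k
    have := congrArg (aeval (yzero F m)) (hB k)
    rw [map_add, hcomp] at this
    -- this : aeval yzero (pderiv inr k g) = aeval yzero (pderiv inl k g) + aeval yzero (pderiv inr k g)
    have := right_eq_add.mp this
    exact this
  -- step 5 : all pderivs of h := aeval yzero g vanish
  set h := aeval (yzero F m) g with hhdef
  have hD : ∀ i, pderiv i h = 0 := by
    intro i
    rw [hhdef, pderiv_aeval_eq]
    apply Finset.sum_eq_zero
    rintro (j | j) _
    · by_cases hij : i = Sum.inl j
      · subst hij
        rw [show yzero F m (Sum.inl j) = X (Sum.inl j) from rfl, pderiv_X_self, mul_one, hC]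
      · rw [show yzero F m (Sum.inl j) = X (Sum.inl j) from rfl,
          pderiv_X_of_ne (fun hh => hij hh.symm), mul_zero]
    · rw [show yzero F m (Sum.inr j) = 0 from rfl, map_zero, mul_zero]
  -- final assembly
  rw [MvPolynomial.mem_ideal_span_monomial_image]
  intro μ hμ
  by_cases hfree : ∀ k, μ (Sum.inr k) = 0
  · -- μ is y-free; μ ∈ h.support
    have hμh : μ ∈ h.support := by
      rw [mem_support_iff, coeff_aeval_yzero hfree]
      exact mem_support_iff.mp hμ
    have hdvd : ∀ k : Fin m, p ∣ μ (Sum.inl k) :=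
      fun k => dvd_exponent_of_pderiv_zero p (hD (Sum.inl k)) hμh
    -- μ ≠ 0 since g homogeneous of positive degree
    have hdeg := hg (mem_support_iff.mp hμ)
    have hne : μ ≠ 0 := by
      rintro rfl
      rw [map_zero] at hdeg
      omega
    obtain ⟨i, hi⟩ := Finsupp.ne_iff.mp hne
    rcases i with j | k
    · refine ⟨Finsupp.single (Sum.inl j) p, Or.inr ⟨j, rfl⟩, ?_⟩
      rw [Finsupp.single_le_iff]
      rcases hdvd j with ⟨c, hc⟩
      rcases Nat.eq_zero_or_pos c with rfl | hcpos
      · exact absurd (by simpa using hc) (by simpa using hi)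
      · rw [hc]
        exact Nat.le_mul_of_pos_right p hcpos
    · exact absurd (hfree k) (by simpa using hi)
  · push_neg at hfree
    obtain ⟨k, hk⟩ := hfree
    refine ⟨Finsupp.single (Sum.inr k) 1, Or.inl ⟨k, rfl⟩, ?_⟩
    rw [Finsupp.single_le_iff]
    omega

lemma polyAct_one (ρ : G →* (Matrix ι ι F)ˣ) (f : MvPolynomial ι F) :
    polyAct ρ 1 f = f := by
  unfold polyAct
  have : (fun i => ∑ j, ((ρ 1⁻¹ : Matrix ι ι F) i j) • (X j : MvPolynomial ι F)) = X := by
    funext i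
    rw [inv_one, map_one, Units.val_one]
    rw [Finset.sum_eq_single i]
    · rw [Matrix.one_apply_eq, one_smul]
    · intro j _ hne
      rw [Matrix.one_apply_ne (Ne.symm hne), zero_smul]
    · intro h; exact absurd (Finset.mem_univ _) h
  rw [this, aeval_X_left_apply]

lemma polyAct_comp (ρ : G →* (Matrix ι ι F)ˣ) (σ τ : G) (f : MvPolynomial ι F) :
    polyAct ρ σ (polyAct ρ τ f) = polyAct ρ (σ * τ) f := by
  unfold polyAct
  rw [show ((aeval fun i => ∑ j, ((ρ σ⁻¹ : Matrix ι ι F) i j) • (X j : MvPolynomial ι F)))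
      ((aeval fun i => ∑ j, ((ρ τ⁻¹ : Matrix ι ι F) i j) • (X j : MvPolynomial ι F)) f)
      = ((aeval fun i => ∑ j, ((ρ σ⁻¹ : Matrix ι ι F) i j) • (X j : MvPolynomial ι F)).comp
        (aeval fun i => ∑ j, ((ρ τ⁻¹ : Matrix ι ι F) i j) • (X j : MvPolynomial ι F))) f from rfl,
    comp_aeval]
  have hfun : (fun i => (aeval fun i' => ∑ j, ((ρ σ⁻¹ : Matrix ι ι F) i' j) • (X j : MvPolynomial ι F))
      (∑ j, ((ρ τ⁻¹ : Matrix ι ι F) i j) • (X j : MvPolynomial ι F)))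
      = (fun i => ∑ j, ((ρ (σ * τ)⁻¹ : Matrix ι ι F) i j) • (X j : MvPolynomial ι F)) := by
    funext i
    rw [map_sum]
    have : ∀ j : ι, (aeval fun i => ∑ j, ((ρ σ⁻¹ : Matrix ι ι F) i j) • (X j : MvPolynomial ι F))
        (((ρ τ⁻¹ : Matrix ι ι F) i j) • (X j : MvPolynomial ι F))
        = ∑ k, ((ρ τ⁻¹ : Matrix ι ι F) i j * (ρ σ⁻¹ : Matrix ι ι F) j k) • (X k : MvPolynomial ι F) := by
      intro j
      rw [map_smul, aeval_X, Finset.smul_sum]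
      exact Finset.sum_congr rfl fun k _ => by rw [smul_smul]
    simp_rw [this]
    rw [Finset.sum_comm]
    refine Finset.sum_congr rfl fun k _ => ?_
    rw [← Finset.sum_smul]
    congr 1
    have hmul : (ρ τ⁻¹ : Matrix ι ι F) * (ρ σ⁻¹ : Matrix ι ι F) = (ρ (σ * τ)⁻¹ : Matrix ι ι F) := by
      rw [← Units.val_mul, ← map_mul]
      congr 2
      group
    calc (∑ j, (ρ τ⁻¹ : Matrix ι ι F) i j * (ρ σ⁻¹ : Matrix ι ι F) j k)
        = ((ρ τ⁻¹ : Matrix ι ι F) * (ρ σ⁻¹ : Matrix ι ι F)) i k := by rw [Matrix.mul_apply]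
      _ = (ρ (σ * τ)⁻¹ : Matrix ι ι F) i k := by rw [hmul]
  rw [hfun]

/-- the homomorphism underlying polyAct -/
noncomputable def polyActHom (ρ : G →* (Matrix ι ι F)ˣ) (σ : G) :
    MvPolynomial ι F →+* MvPolynomial ι F :=
  (MvPolynomial.aeval
    (fun i => ∑ j, ((ρ σ⁻¹ : Matrix ι ι F) i j) • (MvPolynomial.X j : MvPolynomial ι F))).toRingHom

lemma polyActHom_apply (ρ : G →* (Matrix ι ι F)ˣ) (σ : G) (f : MvPolynomial ι F) :
    polyActHom ρ σ f = polyAct ρ σ f := rfl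

lemma polyAct_isHomogeneous (ρ : G →* (Matrix ι ι F)ˣ) (σ : G) {f : MvPolynomial ι F} {d : ℕ}
    (hf : f.IsHomogeneous d) : (polyAct ρ σ f).IsHomogeneous d := by
  unfold polyAct
  have := hf.aeval (fun i => ∑ j, ((ρ σ⁻¹ : Matrix ι ι F) i j) • (X j : MvPolynomial ι F))
    (fun i => by
      apply IsHomogeneous.sum
      intro j _
      rw [smul_eq_C_mul]
      exact isHomogeneous_C_mul_X _ _)
  simpa using this

lemma coeff_prod_X_sub_C_isHomogeneous {α : Type*} (s : Finset α) (a : α → MvPolynomial ι F)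
    (ha : ∀ i ∈ s, (a i).IsHomogeneous 1) (k : ℕ) :
    ((∏ i ∈ s, (Polynomial.X - Polynomial.C (a i))).coeff k).IsHomogeneous (s.card - k) := by
  classical
  induction s using Finset.induction_on generalizing k with
  | empty =>
      rw [Finset.prod_empty, Polynomial.coeff_one, Finset.card_empty, Nat.zero_sub]
      split_ifs
      · exact isHomogeneous_one ι F
      · exact isHomogeneous_zero _ _ _
  | @insert i s' hi ih =>
      rw [Finset.prod_insert hi, Finset.card_insert_of_notMem hi]
      have hdeg : (∏ j ∈ s', (Polynomial.X - Polynomial.C (a j))).natDegree ≤ s'.card := by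
        refine le_trans (Polynomial.natDegree_prod_le _ _) ?_
        have h1 := Finset.sum_le_card_nsmul s'
          (fun j => (Polynomial.X - Polynomial.C (a j)).natDegree) 1
          (fun j _ => Polynomial.natDegree_X_sub_C_le _)
        simpa using h1
      have ha' : ∀ j ∈ s', (a j).IsHomogeneous 1 := fun j hj => ha j (Finset.mem_insert_of_mem hj)
      have hai : (a i).IsHomogeneous 1 := ha i (Finset.mem_insert_self _ _)
      rw [sub_mul, Polynomial.coeff_sub, Polynomial.coeff_C_mul]
      cases k with
      | zero =>
          rw [Polynomial.coeff_X_mul_zero, zero_sub]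
          apply IsHomogeneous.neg
          have h2 : s'.card + 1 - 0 = 1 + (s'.card - 0) := by omega
          rw [h2]
          exact hai.mul (ih ha' 0)
      | succ k =>
          rw [Polynomial.coeff_X_mul]
          have h3 : s'.card + 1 - (k + 1) = s'.card - k := by omega
          rw [h3]
          apply IsHomogeneous.sub (ih ha' k)
          by_cases hk : k + 1 ≤ s'.card
          · have := hai.mul (ih ha' (k + 1))
            have heq : 1 + (s'.card - (k + 1)) = s'.card + 1 - (k + 1) := by omega
            rw [heq] at this
            have heq2 : s'.card + 1 - (k + 1) = s'.card - k := by omega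
            rwa [heq2] at this
          · rw [Polynomial.coeff_eq_zero_of_natDegree_lt (lt_of_le_of_lt hdeg (by omega)),
              mul_zero]
            exact isHomogeneous_zero _ _ _

variable [Fintype G]

noncomputable def normPoly (ρ : G →* (Matrix ι ι F)ˣ) (v : ι) :
    Polynomial (MvPolynomial ι F) :=
  ∏ σ : G, (Polynomial.X - Polynomial.C (polyAct ρ σ (X v)))

lemma normPoly_map (ρ : G →* (Matrix ι ι F)ˣ) (v : ι) (τ : G) :
    (normPoly ρ v).map (polyActHom ρ τ) = normPoly ρ v := by
  unfold normPoly
  rw [Polynomial.map_prod]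
  have : ∀ σ : G, ((Polynomial.X - Polynomial.C (polyAct ρ σ (X v))).map (polyActHom ρ τ))
      = Polynomial.X - Polynomial.C (polyAct ρ (τ * σ) (X v)) := by
    intro σ
    rw [Polynomial.map_sub, Polynomial.map_X, Polynomial.map_C, polyActHom_apply, polyAct_comp]
  simp_rw [this]
  exact Fintype.prod_equiv (Equiv.mulLeft τ)
    (fun σ => Polynomial.X - Polynomial.C (polyAct ρ (τ * σ) (X v)))
    (fun σ => Polynomial.X - Polynomial.C (polyAct ρ σ (X v)))
    (fun σ => by rw [Equiv.coe_mulLeft])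

lemma normPoly_coeff_isInv (ρ : G →* (Matrix ι ι F)ˣ) (v : ι) (k : ℕ) :
    IsInv ρ ((normPoly ρ v).coeff k) := by
  intro τ
  rw [← polyActHom_apply, ← Polynomial.coeff_map, normPoly_map]

lemma normPoly_monic (ρ : G →* (Matrix ι ι F)ˣ) (v : ι) : (normPoly ρ v).Monic :=
  Polynomial.monic_prod_of_monic _ _ fun σ _ => Polynomial.monic_X_sub_C _

lemma normPoly_natDegree (ρ : G →* (Matrix ι ι F)ˣ) (v : ι) :
    (normPoly ρ v).natDegree = Fintype.card G := by
  unfold normPoly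
  rw [Polynomial.natDegree_prod _ _ fun σ _ => Polynomial.X_sub_C_ne_zero _]
  simp [Polynomial.natDegree_X_sub_C]

lemma normPoly_eval (ρ : G →* (Matrix ι ι F)ˣ) (v : ι) :
    (normPoly ρ v).eval (X v) = 0 := by
  unfold normPoly
  rw [Polynomial.eval_prod]
  apply Finset.prod_eq_zero (Finset.mem_univ (1 : G))
  rw [Polynomial.eval_sub, Polynomial.eval_X, Polynomial.eval_C, polyAct_one, sub_self]

lemma X_pow_card_mem (ρ : G →* (Matrix ι ι F)ˣ) (v : ι) :
    (X v : MvPolynomial ι F) ^ Fintype.card G ∈ hilbertIdeal ρ := by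
  set N := Fintype.card G with hN
  have hNpos : 0 < N := Fintype.card_pos
  have heval := normPoly_eval ρ v
  rw [Polynomial.eval_eq_sum_range, normPoly_natDegree, Finset.sum_range_succ] at heval
  have hlead : (normPoly ρ v).coeff N = 1 := by
    have := (normPoly_monic ρ v).leadingCoeff
    rwa [Polynomial.leadingCoeff, normPoly_natDegree] at this
  rw [hlead, one_mul] at heval
  have : (X v : MvPolynomial ι F) ^ N =
      -∑ i ∈ Finset.range N, (normPoly ρ v).coeff i * (X v) ^ i := by
    linear_combination heval
  rw [this]
  apply neg_mem
  apply Ideal.sum_mem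
  intro i hi
  rw [Finset.mem_range] at hi
  apply Ideal.mul_mem_right
  apply Ideal.subset_span
  refine ⟨⟨N - i, by omega, ?_⟩, normPoly_coeff_isInv ρ v i⟩
  have := coeff_prod_X_sub_C_isHomogeneous (Finset.univ : Finset G)
    (fun σ => polyAct ρ σ (X v))
    (fun σ _ => by simpa using polyAct_isHomogeneous ρ σ (isHomogeneous_X F v)) i
  simpa [normPoly, hN] using this

lemma mem_hilbert_of_large_degree (ρ : G →* (Matrix ι ι F)ˣ) {f : MvPolynomial ι F} {d : ℕ}
    (hf : f.IsHomogeneous d) (hd : Fintype.card ι * (Fintype.card G - 1) < d) :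
    f ∈ hilbertIdeal ρ := by
  set N := Fintype.card G with hN
  rw [f.as_sum]
  apply Ideal.sum_mem
  intro μ hμ
  have hdeg := hf (mem_support_iff.mp hμ)
  have : ∃ v : ι, N ≤ μ v := by
    by_contra hcon
    push_neg at hcon
    have hle : ∀ v : ι, μ v ≤ N - 1 := fun v => by have := hcon v; omega
    have hw : (Finsupp.weight 1) μ = ∑ i ∈ μ.support, μ i := by
      rw [Finsupp.weight_apply, Finsupp.sum]
      exact Finset.sum_congr rfl fun i _ => by simp
    have : (Finsupp.weight 1) μ ≤ Fintype.card ι * (N - 1) := by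
      rw [hw]
      calc (∑ i ∈ μ.support, μ i)
          ≤ ∑ i : ι, μ i := Finset.sum_le_sum_of_subset (Finset.subset_univ _)
        _ ≤ ∑ _i : ι, (N - 1) := Finset.sum_le_sum fun i _ => hle i
        _ = Fintype.card ι * (N - 1) := by
            rw [Finset.sum_const, smul_eq_mul, Finset.card_univ]
    omega
  obtain ⟨v, hv⟩ := this
  have hsingle : Finsupp.single v N ≤ μ := Finsupp.single_le_iff.mpr hv
  have hsplit : monomial μ (coeff μ f)
      = (X v : MvPolynomial ι F) ^ N * monomial (μ - Finsupp.single v N) (coeff μ f) := by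
    rw [X_pow_eq_monomial, monomial_mul, one_mul, add_tsub_cancel_of_le hsingle]
  rw [hsplit]
  exact Ideal.mul_mem_right _ _ (X_pow_card_mem ρ v)

lemma bddAbove_topDeg_set (ρ : G →* (Matrix ι ι F)ˣ) :
    BddAbove {d : ℕ | ∃ f : MvPolynomial ι F, f.IsHomogeneous d ∧ f ∉ hilbertIdeal ρ} := by
  apply BddAbove.mono (t := Set.Iic (Fintype.card ι * (Fintype.card G - 1)))
  · rintro d ⟨f, hf, hmem⟩
    rw [Set.mem_Iic]
    by_contra hcon
    push_neg at hcon
    exact hmem (mem_hilbert_of_large_degree ρ hf hcon)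
  · exact bddAbove_Iic

lemma prod_X_pow_eq_monomial'' {κ β : Type*} [DecidableEq κ] (s : Finset β) (g : β → κ) (a : ℕ) :
    (∏ k ∈ s, (X (g k) : MvPolynomial κ F) ^ a)
      = monomial (∑ k ∈ s, Finsupp.single (g k) a) (1 : F) := by
  classical
  induction s using Finset.induction_on with
  | empty => simp [monomial_zero']
  | @insert i s' hi ih =>
      rw [Finset.prod_insert hi, Finset.sum_insert hi, ih, X_pow_eq_monomial, monomial_mul,
        one_mul]


end Helpers

/-- In the modular case (`char F = p > 0` divides `|G|`), for a
faithful `G`-module `V` one has `topdeg F[V^m]_G ≥ m(p-1)` for all `m ≥ 1`. -/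
theorem topDeg_glPow_ge [Fintype G] (p : ℕ) [CharP F p] (hp : p ≠ 0)
    (hdvd : p ∣ Fintype.card G) (ρ : G →* (Matrix ι ι F)ˣ)
    (hfaithful : Function.Injective ρ) :
    ∀ m : ℕ, 0 < m → m * (p - 1) ≤ topDeg (glPow ρ m) := by
  intro m hm
  classical
  have hprime : p.Prime := (CharP.char_is_prime_or_zero F p).resolve_right hp
  haveI : Fact p.Prime := ⟨hprime⟩
  obtain ⟨σ, hσ⟩ := exists_prime_orderOf_dvd_card p hdvd
  set M : Matrix ι ι F := (ρ σ⁻¹ : Matrix ι ι F) with hMdef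
  have hσ1 : σ ≠ 1 := by
    rintro rfl
    rw [orderOf_one] at hσ
    exact hprime.ne_one hσ.symm
  have hMne : M ≠ 1 := by
    intro h
    have h1 : ρ σ⁻¹ = 1 := Units.ext h
    have h2 : σ⁻¹ = 1 := hfaithful (by rw [h1, map_one])
    exact hσ1 (inv_eq_one.mp h2)
  haveI hni : Nonempty ι := by
    by_contra hempty
    rw [not_nonempty_iff] at hempty
    exact hMne (Subsingleton.elim _ _)
  have hMp : M ^ p = 1 := by
    have hσp : (σ⁻¹) ^ p = 1 := by
      rw [inv_pow, ← hσ, pow_orderOf_eq_one, inv_one]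
    rw [hMdef, ← Units.val_pow_eq_pow_val, ← map_pow, hσp, map_one, Units.val_one]
  set Nmat : Matrix ι ι F := M - 1 with hNdef
  have hNne : Nmat ≠ 0 := fun h => hMne (by rwa [hNdef, sub_eq_zero] at h)
  have hNp : Nmat ^ p = 0 := by
    rw [hNdef, sub_pow_char_of_commute p (Commute.one_right M), hMp, one_pow, sub_self]
  have hex : ∃ k, Nmat ^ (k + 1) = 0 := ⟨p - 1, by rwa [Nat.sub_add_cancel hprime.one_lt.le]⟩
  set k₀ := Nat.find hex with hk₀def
  have hk₀ : Nmat ^ (k₀ + 1) = 0 := Nat.find_spec hex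
  have hk₀pos : 1 ≤ k₀ := by
    rcases Nat.eq_zero_or_pos k₀ with h | h
    · exfalso
      apply hNne
      have h2 := hk₀
      rwa [h, zero_add, pow_one] at h2
    · exact h
  have hksub : Nmat ^ k₀ ≠ 0 := by
    have h3 := Nat.find_min hex (show k₀ - 1 < k₀ by omega)
    rwa [Nat.sub_add_cancel hk₀pos] at h3
  have hwex : ∃ w : ι → F, (Nmat ^ k₀).mulVec w ≠ 0 := by
    by_contra hcon
    push_neg at hcon
    apply hksub
    ext i j
    have h4 := congrFun (hcon (Pi.single j 1)) i
    rw [Matrix.mulVec_single] at h4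
    simpa using h4
  obtain ⟨w, hw⟩ := hwex
  set cvec : ι → F := (Nmat ^ (k₀ - 1)).mulVec w with hcdef
  set dvec : ι → F := (Nmat ^ k₀).mulVec w with hddef
  have hdc : Nmat.mulVec cvec = dvec := by
    rw [hcdef, Matrix.mulVec_mulVec, ← pow_succ', Nat.sub_add_cancel hk₀pos]
  have hdd : Nmat.mulVec dvec = 0 := by
    rw [hddef, Matrix.mulVec_mulVec, ← pow_succ', hk₀, Matrix.zero_mulVec]
  have hM1N : M = 1 + Nmat := by rw [hNdef]; abel
  have hMc : M.mulVec cvec = cvec + dvec := by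
    rw [hM1N, Matrix.add_mulVec, Matrix.one_mulVec, hdc]
  have hMd : M.mulVec dvec = dvec := by
    rw [hM1N, Matrix.add_mulVec, Matrix.one_mulVec, hdd, add_zero]
  have hnotscalar : ∀ s : F, cvec ≠ s • dvec := by
    intro s h
    have h6 : dvec = 0 := by rw [← hdc, h, Matrix.mulVec_smul, hdd, smul_zero]
    exact hw h6
  obtain ⟨j₀, hj₀⟩ := Function.ne_iff.mp hw
  have hj₀' : dvec j₀ ≠ 0 := by simpa using hj₀
  have hjex : ∃ j, cvec j * dvec j₀ - cvec j₀ * dvec j ≠ 0 := by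
    by_contra hcon
    push_neg at hcon
    apply hnotscalar (cvec j₀ / dvec j₀)
    funext j
    have h5 := hcon j
    rw [sub_eq_zero] at h5
    show cvec j = (cvec j₀ / dvec j₀) * dvec j
    field_simp
    linear_combination h5
  obtain ⟨j₁, hden⟩ := hjex
  set aden : F := cvec j₁ * dvec j₀ - cvec j₀ * dvec j₁ with hadef
  have hj₁₀ : j₁ ≠ j₀ := by
    rintro rfl
    apply hden
    ring
  set evec : ι → F := fun i =>
    if i = j₁ then -cvec j₀ / aden else if i = j₀ then cvec j₁ / aden else 0 with hedef
  have hsum2 : ∀ v : ι → F, ∑ i, evec i * v i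
      = (-cvec j₀ / aden) * v j₁ + (cvec j₁ / aden) * v j₀ := by
    intro v
    rw [Finset.sum_eq_add_of_mem j₁ j₀ (Finset.mem_univ _) (Finset.mem_univ _) hj₁₀]
    · rw [hedef]
      simp [hj₁₀, Ne.symm hj₁₀]
    · intro i _ hi
      rw [hedef]
      simp only [if_neg hi.1, if_neg hi.2, zero_mul]
  have hec : ∑ i, evec i * cvec i = 0 := by
    rw [hsum2]
    field_simp
    ring
  have hed : ∑ i, evec i * dvec i = 1 := by
    rw [hsum2]
    field_simp
    linear_combination hadef
  -- the evaluation map φ onto the small polynomial ring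
  set Φv : ι × Fin m → MvPolynomial (Fin m ⊕ Fin m) F := fun v =>
    C (dvec v.1) * X (Sum.inl v.2) + C (cvec v.1) * X (Sum.inr v.2) with hΦdef
  have hΦhom : ∀ v, (Φv v).IsHomogeneous 1 := by
    intro v
    exact (isHomogeneous_C_mul_X _ _).add (isHomogeneous_C_mul_X _ _)
  -- the matrix of the block action
  have hval : ((glPow ρ m σ : (Matrix (ι × Fin m) (ι × Fin m) F)ˣ) : Matrix (ι × Fin m) (ι × Fin m) F)
      = Matrix.blockDiagonal (fun _ : Fin m => ((ρ σ : (Matrix ι ι F)ˣ) : Matrix ι ι F)) := rfl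
  -- equivariance of the evaluation map
  have hequiv : ∀ f : MvPolynomial (ι × Fin m) F,
      aeval Φv (polyAct (glPow ρ m) σ f) = aeval (tsub' F m) (aeval Φv f) := by
    have hcomp : (aeval Φv).comp (aeval (fun v : ι × Fin m =>
        ∑ v', ((glPow ρ m σ⁻¹ : (Matrix (ι × Fin m) (ι × Fin m) F)ˣ)
          : Matrix (ι × Fin m) (ι × Fin m) F) v v' • (X v' : MvPolynomial (ι × Fin m) F)))
        = (aeval (tsub' F m)).comp (aeval Φv) := by
      apply MvPolynomial.algHom_ext
      rintro ⟨j, k⟩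
      rw [AlgHom.comp_apply, AlgHom.comp_apply, aeval_X, aeval_X]
      have hRHS : aeval (tsub' F m) (Φv (j, k))
          = C (dvec j) * (X (Sum.inl k) + X (Sum.inr k)) + C (cvec j) * X (Sum.inr k) := by
        rw [hΦdef]
        simp [tsub']
      rw [hRHS, map_sum]
      have hentry : ∀ v' : ι × Fin m,
          ((glPow ρ m σ⁻¹ : (Matrix (ι × Fin m) (ι × Fin m) F)ˣ)
            : Matrix (ι × Fin m) (ι × Fin m) F) (j, k) v'
          = if k = v'.2 then M j v'.1 else 0 := by
        rintro ⟨j', k'⟩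
        show Matrix.blockDiagonal (fun _ : Fin m => (M : Matrix ι ι F)) (j, k) (j', k')
          = if k = k' then M j j' else 0
        rw [Matrix.blockDiagonal_apply]
      have hterm : ∀ v' : ι × Fin m, aeval Φv
          (((glPow ρ m σ⁻¹ : (Matrix (ι × Fin m) (ι × Fin m) F)ˣ)
            : Matrix (ι × Fin m) (ι × Fin m) F) (j, k) v' • (X v' : MvPolynomial (ι × Fin m) F))
          = if k = v'.2 then M j v'.1 • Φv v' else 0 := by
        intro v'
        rw [map_smul, aeval_X, hentry]
        split_ifs
        · rfl
        · rw [zero_smul]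
      simp_rw [hterm]
      rw [Fintype.sum_prod_type]
      have hinner : ∀ j' : ι, (∑ k' : Fin m, if k = k' then M j j' • Φv (j', k') else 0)
          = M j j' • Φv (j', k) := by
        intro j'
        rw [Finset.sum_ite_eq]
        simp
      simp_rw [hinner]
      have hexpand : ∀ j' : ι, M j j' • Φv (j', k)
          = C (M j j' * dvec j') * X (Sum.inl k) + C (M j j' * cvec j') * X (Sum.inr k) := by
        intro j'
        rw [hΦdef]
        show M j j' • (C (dvec j') * X (Sum.inl k) + C (cvec j') * X (Sum.inr k)) = _
        rw [smul_add, smul_eq_C_mul, smul_eq_C_mul, ← mul_assoc, ← mul_assoc, ← C_mul, ← C_mul]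
      simp_rw [hexpand]
      rw [Finset.sum_add_distrib, ← Finset.sum_mul, ← Finset.sum_mul, ← map_sum C, ← map_sum C]
      have hmvc : ∑ j' : ι, M j j' * cvec j' = cvec j + dvec j := by
        have : (M.mulVec cvec) j = ∑ j' : ι, M j j' * cvec j' := by
          simp [Matrix.mulVec, dotProduct]
        rw [← this, hMc]
        rfl
      have hmvd : ∑ j' : ι, M j j' * dvec j' = dvec j := by
        have : (M.mulVec dvec) j = ∑ j' : ι, M j j' * dvec j' := by
          simp [Matrix.mulVec, dotProduct]
        rw [← this, hMd]
      rw [hmvc, hmvd, C_add]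
      ring
    intro f
    exact AlgHom.congr_fun hcomp f
  -- the Hilbert ideal maps into the monomial ideal J
  have hHsub : ∀ f ∈ hilbertIdeal (glPow ρ m),
      aeval Φv f ∈ Ideal.span ((fun s => monomial s (1 : F)) '' genExp p m) := by
    intro f hf
    have hle : hilbertIdeal (glPow ρ m) ≤
        Ideal.comap (aeval Φv : MvPolynomial (ι × Fin m) F →ₐ[F] _).toRingHom
          (Ideal.span ((fun s => monomial s (1 : F)) '' genExp p m)) := by
      rw [hilbertIdeal]
      apply Ideal.span_le.mpr
      rintro g ⟨⟨dd, hdd, hghom⟩, hginv⟩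
      rw [SetLike.mem_coe, Ideal.mem_comap]
      show aeval Φv g ∈ _
      apply small_lemma p hdd
      · have := hghom.aeval Φv hΦhom
        simpa using this
      · rw [← hequiv g, hginv σ]
    exact hle hf
  -- the witness polynomial
  set fwit : MvPolynomial (ι × Fin m) F :=
    ∏ k : Fin m, (∑ j, C (evec j) * X (j, k)) ^ (p - 1) with hfwitdef
  have hfwhom : fwit.IsHomogeneous (m * (p - 1)) := by
    have h7 : ∀ k : Fin m, ((∑ j, C (evec j) * X ((j, k) : ι × Fin m)) ^ (p - 1)).IsHomogeneous
        (1 * (p - 1)) := by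
      intro k
      apply IsHomogeneous.pow
      exact IsHomogeneous.sum _ _ _ fun j _ => isHomogeneous_C_mul_X _ _
    have h8 := IsHomogeneous.prod Finset.univ _ (fun _ : Fin m => 1 * (p - 1)) fun k _ => h7 k
    rw [hfwitdef]
    convert h8 using 1
    rw [Finset.sum_const, Finset.card_univ, Fintype.card_fin, smul_eq_mul, one_mul]
  -- image of the witness
  have hφu : ∀ k : Fin m, aeval Φv (∑ j, C (evec j) * X ((j, k) : ι × Fin m))
      = X (Sum.inl k) := by
    intro k
    rw [map_sum]
    have h9 : ∀ j : ι, aeval Φv (C (evec j) * X ((j, k) : ι × Fin m))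
        = C (evec j * dvec j) * X (Sum.inl k) + C (evec j * cvec j) * X (Sum.inr k) := by
      intro j
      rw [map_mul, aeval_C, aeval_X, hΦdef]
      show (algebraMap F _) (evec j) * (C (dvec j) * X (Sum.inl k) + C (cvec j) * X (Sum.inr k)) = _
      rw [algebraMap_eq, mul_add, ← mul_assoc, ← mul_assoc, ← C_mul, ← C_mul]
    simp_rw [h9]
    rw [Finset.sum_add_distrib, ← Finset.sum_mul, ← Finset.sum_mul, ← map_sum C, ← map_sum C,
      hed, hec, map_one, one_mul, map_zero, zero_mul, add_zero]
  have hφf : aeval Φv fwit = monomial (∑ k : Fin m, Finsupp.single (Sum.inl k) (p - 1)) (1 : F) := by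
    rw [hfwitdef, map_prod]
    simp_rw [map_pow, hφu]
    exact prod_X_pow_eq_monomial'' _ _ _
  -- the witness is not in the Hilbert ideal
  set t : (Fin m ⊕ Fin m) →₀ ℕ := ∑ k : Fin m, Finsupp.single (Sum.inl k) (p - 1) with htdef
  have hfnm : fwit ∉ hilbertIdeal (glPow ρ m) := by
    intro hmem
    have hJ := hHsub fwit hmem
    rw [hφf] at hJ
    rw [mem_ideal_span_monomial_image] at hJ
    have htsupp : t ∈ (monomial t (1 : F)).support := by
      rw [support_monomial, if_neg (one_ne_zero : (1 : F) ≠ 0)]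
      exact Finset.mem_singleton_self t
    obtain ⟨e, he, hle⟩ := hJ t htsupp
    have htinl : ∀ k : Fin m, t (Sum.inl k) = p - 1 := by
      intro k
      rw [htdef, Finset.sum_apply']
      rw [Finset.sum_eq_single k]
      · rw [Finsupp.single_apply, if_pos rfl]
      · intro b _ hb
        rw [Finsupp.single_apply, if_neg (by simpa using hb)]
      · intro h; exact absurd (Finset.mem_univ _) h
    have htinr : ∀ k : Fin m, t (Sum.inr k) = 0 := by
      intro k
      rw [htdef, Finset.sum_apply']
      apply Finset.sum_eq_zero
      intro b _
      rw [Finsupp.single_apply, if_neg (by simp)]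
    rcases he with ⟨k, rfl⟩ | ⟨k, rfl⟩
    · have := (Finsupp.single_le_iff).mp hle
      rw [htinr k] at this
      omega
    · have := (Finsupp.single_le_iff).mp hle
      rw [htinl k] at this
      omega
  -- conclusion
  apply le_csSup (bddAbove_topDeg_set (glPow ρ m))
  exact ⟨fwit, hfwhom, hfnm⟩
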